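/- For a finite three-player game G with integer payoffs and integer r: the Nash equilibrium (⊥,⊥,⊥) of G' is trembling hand perfect if the minmax value of Player 1 in G is strictly less than r, and is not trembling hand perfect if the minmax value is strictly greater than r. Hence the promise problem of approximating the minmax value reduces to deciding trembling hand perfection of a given equilibrium. -/

import Mathlib

open Filter

/-- A mixed strategy over a finite pure strategy set. -/
def IsMixed {S : Type*} [Fintype S] (σ : S → ℝ) : Prop :=
  (∀ a, 0 ≤ σ a) ∧ ∑ a, σ a = 1

/-- A fully mixed strategy: positive probability on every pure strategy. -/
def IsFullyMixed {S : Type*} [Fintype S] (σ : S → ℝ) : Prop :=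
  (∀ a, 0 < σ a) ∧ ∑ a, σ a = 1

/-- The point mass on a pure strategy. -/
def pureStrat {S : Type*} [DecidableEq S] (a : S) : S → ℝ :=
  fun b => if b = a then 1 else 0

/-- Expected payoff (w.r.t. payoff function `w`) in a three-player game when the
players play mixed strategies `σ1`, `σ2`, `σ3`. -/
noncomputable def expMix3 {S1 S2 S3 : Type*} [Fintype S1] [Fintype S2] [Fintype S3]
    (w : S1 → S2 → S3 → ℝ) (σ1 : S1 → ℝ) (σ2 : S2 → ℝ) (σ3 : S3 → ℝ) : ℝ :=
  ∑ a, ∑ b, ∑ c, σ1 a * σ2 b * σ3 c * w a b c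

/-- Player 1's expected payoff from pure strategy `a` against mixed `σ2`, `σ3`. -/
noncomputable def expPure1 {S1 S2 S3 : Type*} [Fintype S2] [Fintype S3]
    (w : S1 → S2 → S3 → ℝ) (a : S1) (σ2 : S2 → ℝ) (σ3 : S3 → ℝ) : ℝ :=
  ∑ b, ∑ c, σ2 b * σ3 c * w a b c

/-- Nash equilibrium of a three-player game with payoff functions `w1, w2, w3`. -/
def IsNash3 {S1 S2 S3 : Type*} [Fintype S1] [Fintype S2] [Fintype S3]
    (w1 w2 w3 : S1 → S2 → S3 → ℝ) (σ1 : S1 → ℝ) (σ2 : S2 → ℝ) (σ3 : S3 → ℝ) : Prop :=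
  IsMixed σ1 ∧ IsMixed σ2 ∧ IsMixed σ3 ∧
  (∀ τ, IsMixed τ → expMix3 w1 τ σ2 σ3 ≤ expMix3 w1 σ1 σ2 σ3) ∧
  (∀ τ, IsMixed τ → expMix3 w2 σ1 τ σ3 ≤ expMix3 w2 σ1 σ2 σ3) ∧
  (∀ τ, IsMixed τ → expMix3 w3 σ1 σ2 τ ≤ expMix3 w3 σ1 σ2 σ3)

/-- Trembling hand perfection of a profile in a three-player game: some sequence of
fully mixed profiles converging (pointwise) to the profile against which, eventually,
each player's given strategy is a best reply. -/
def IsTHP3 {S1 S2 S3 : Type*} [Fintype S1] [Fintype S2] [Fintype S3]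
    (w1 w2 w3 : S1 → S2 → S3 → ℝ) (μ1 : S1 → ℝ) (μ2 : S2 → ℝ) (μ3 : S3 → ℝ) : Prop :=
  ∃ σ1 : ℕ → S1 → ℝ, ∃ σ2 : ℕ → S2 → ℝ, ∃ σ3 : ℕ → S3 → ℝ,
    (∀ k, IsFullyMixed (σ1 k) ∧ IsFullyMixed (σ2 k) ∧ IsFullyMixed (σ3 k)) ∧
    (∀ a, Tendsto (fun k => σ1 k a) atTop (nhds (μ1 a))) ∧
    (∀ b, Tendsto (fun k => σ2 k b) atTop (nhds (μ2 b))) ∧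
    (∀ c, Tendsto (fun k => σ3 k c) atTop (nhds (μ3 c))) ∧
    ∃ N, ∀ k ≥ N,
      (∀ τ, IsMixed τ → expMix3 w1 τ (σ2 k) (σ3 k) ≤ expMix3 w1 μ1 (σ2 k) (σ3 k)) ∧
      (∀ τ, IsMixed τ → expMix3 w2 (σ1 k) τ (σ3 k) ≤ expMix3 w2 (σ1 k) μ2 (σ3 k)) ∧
      (∀ τ, IsMixed τ → expMix3 w3 (σ1 k) (σ2 k) τ ≤ expMix3 w3 (σ1 k) (σ2 k) μ3)

/-- The minmax value of Player 1 in a three-player game: the infimum over mixed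
strategies of Players 2 and 3 of the best expected payoff of Player 1. -/
noncomputable def minmaxVal {S1 S2 S3 : Type*} [Fintype S1] [Fintype S2] [Fintype S3]
    (w : S1 → S2 → S3 → ℝ) : ℝ :=
  sInf {x | ∃ σ2 σ3, IsMixed σ2 ∧ IsMixed σ3 ∧ x = ⨆ a, expPure1 w a σ2 σ3}

/-- Player 1's payoff in the game `G'`: `r` if some player plays `⊥` (i.e. `none`),
and the `G`-payoff otherwise. -/
noncomputable def payBot {S1 S2 S3 : Type*} (u1 : S1 → S2 → S3 → ℤ) (r : ℤ) :
    Option S1 → Option S2 → Option S3 → ℝ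
  | some a, some b, some c => (u1 a b c : ℝ)
  | _, _, _ => (r : ℝ)

/-- The all-zero payoff function (for Players 2 and 3 in `G'`). -/
def zeroPay {S1 S2 S3 : Type*} : Option S1 → Option S2 → Option S3 → ℝ :=
  fun _ _ _ => 0
set_option linter.unusedSectionVars false
section H
variable {S1 S2 S3 : Type*} [Fintype S1] [Fintype S2] [Fintype S3]

lemma expMix3_eq_sum (w : S1 → S2 → S3 → ℝ) (σ1 : S1 → ℝ) (σ2 : S2 → ℝ) (σ3 : S3 → ℝ) :
    expMix3 w σ1 σ2 σ3 = ∑ a, σ1 a * expPure1 w a σ2 σ3 := by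
  simp [expMix3, expPure1, Finset.mul_sum, mul_assoc]

lemma expMix3_pure [DecidableEq S1] (w : S1 → S2 → S3 → ℝ) (x : S1) (σ2 : S2 → ℝ) (σ3 : S3 → ℝ) :
    expMix3 w (pureStrat x) σ2 σ3 = expPure1 w x σ2 σ3 := by
  rw [expMix3_eq_sum]
  simp [pureStrat]

lemma sum_const_prod (σ2 : S2 → ℝ) (σ3 : S3 → ℝ) (K : ℝ) :
    ∑ b, ∑ c, σ2 b * σ3 c * K = (∑ b, σ2 b) * (∑ c, σ3 c) * K := by
  rw [Finset.sum_mul_sum, Finset.sum_mul]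
  congr 1; ext b
  rw [Finset.sum_mul]

lemma expPure1_le (w : S1 → S2 → S3 → ℝ) (a : S1) {σ2 : S2 → ℝ} {σ3 : S3 → ℝ}
    (h2 : IsMixed σ2) (h3 : IsMixed σ3) {M : ℝ} (hM : ∀ b c, w a b c ≤ M) :
    expPure1 w a σ2 σ3 ≤ M := by
  calc expPure1 w a σ2 σ3 ≤ ∑ b, ∑ c, σ2 b * σ3 c * M := by
        refine Finset.sum_le_sum fun b _ => Finset.sum_le_sum fun c _ => ?_
        exact mul_le_mul_of_nonneg_left (hM b c) (mul_nonneg (h2.1 b) (h3.1 c))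
    _ = M := by rw [sum_const_prod, h2.2, h3.2]; ring

lemma le_expPure1 (w : S1 → S2 → S3 → ℝ) (a : S1) {σ2 : S2 → ℝ} {σ3 : S3 → ℝ}
    (h2 : IsMixed σ2) (h3 : IsMixed σ3) {M : ℝ} (hM : ∀ b c, -M ≤ w a b c) :
    -M ≤ expPure1 w a σ2 σ3 := by
  calc (-M : ℝ) = ∑ b, ∑ c, σ2 b * σ3 c * (-M) := by rw [sum_const_prod, h2.2, h3.2]; ring
    _ ≤ expPure1 w a σ2 σ3 := by
        refine Finset.sum_le_sum fun b _ => Finset.sum_le_sum fun c _ => ?_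
        exact mul_le_mul_of_nonneg_left (hM b c) (mul_nonneg (h2.1 b) (h3.1 c))

lemma expPure1_add2 (w : S1 → S2 → S3 → ℝ) (a : S1) (σ σ' : S2 → ℝ) (σ3 : S3 → ℝ) (x y : ℝ) :
    expPure1 w a (fun b => x * σ b + y * σ' b) σ3
      = x * expPure1 w a σ σ3 + y * expPure1 w a σ' σ3 := by
  unfold expPure1
  rw [Finset.mul_sum, Finset.mul_sum, ← Finset.sum_add_distrib]
  congr 1; ext b
  rw [Finset.mul_sum, Finset.mul_sum, ← Finset.sum_add_distrib]
  congr 1; ext c; ring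

lemma expPure1_add3 (w : S1 → S2 → S3 → ℝ) (a : S1) (σ2 : S2 → ℝ) (σ σ' : S3 → ℝ) (x y : ℝ) :
    expPure1 w a σ2 (fun c => x * σ c + y * σ' c)
      = x * expPure1 w a σ2 σ + y * expPure1 w a σ2 σ' := by
  unfold expPure1
  rw [Finset.mul_sum, Finset.mul_sum, ← Finset.sum_add_distrib]
  congr 1; ext b
  rw [Finset.mul_sum, Finset.mul_sum, ← Finset.sum_add_distrib]
  congr 1; ext c; ring

lemma sum_scale (w : S1 → S2 → S3 → ℝ) (a : S1) (f : S2 → ℝ) (g : S3 → ℝ) (x y : ℝ) :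
    ∑ b, ∑ c, (x * f b) * (y * g c) * w a b c = x * y * expPure1 w a f g := by
  unfold expPure1
  rw [Finset.mul_sum]
  congr 1; ext b
  rw [Finset.mul_sum]
  congr 1; ext c; ring

end H
set_option linter.unusedSectionVars false
section H2
variable {S1 S2 S3 : Type*} [Fintype S1] [Fintype S2] [Fintype S3]

lemma payBot_none (u1 : S1 → S2 → S3 → ℤ) (r : ℤ) (b : Option S2) (c : Option S3) :
    payBot u1 r none b c = (r : ℝ) := by
  cases b <;> cases c <;> rfl

lemma payBot_some_none2 (u1 : S1 → S2 → S3 → ℤ) (r : ℤ) (a : S1) (c : Option S3) :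
    payBot u1 r (some a) none c = (r : ℝ) := by
  cases c <;> rfl

lemma payBot_some_none3 (u1 : S1 → S2 → S3 → ℤ) (r : ℤ) (a : S1) (b : S2) :
    payBot u1 r (some a) (some b) none = (r : ℝ) := rfl

lemma payBot_some (u1 : S1 → S2 → S3 → ℤ) (r : ℤ) (a : S1) (b : S2) (c : S3) :
    payBot u1 r (some a) (some b) (some c) = (u1 a b c : ℝ) := rfl

lemma expPure1_payBot_none (u1 : S1 → S2 → S3 → ℤ) (r : ℤ)
    {σ2 : Option S2 → ℝ} {σ3 : Option S3 → ℝ} (h2 : ∑ b, σ2 b = 1) (h3 : ∑ c, σ3 c = 1) :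
    expPure1 (payBot u1 r) none σ2 σ3 = (r : ℝ) := by
  unfold expPure1
  simp only [payBot_none]
  rw [sum_const_prod, h2, h3]; ring

lemma expPure1_payBot_some (u1 : S1 → S2 → S3 → ℤ) (r : ℤ) (a : S1)
    {σ2 : Option S2 → ℝ} {σ3 : Option S3 → ℝ} (h2 : ∑ b, σ2 b = 1) (h3 : ∑ c, σ3 c = 1) :
    expPure1 (payBot u1 r) (some a) σ2 σ3
      = (r : ℝ) * (1 - (∑ b, σ2 (some b)) * (∑ c, σ3 (some c)))
        + ∑ b, ∑ c, σ2 (some b) * σ3 (some c) * (u1 a b c : ℝ) := by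
  have e2 : σ2 none = 1 - ∑ b, σ2 (some b) := by
    rw [Fintype.sum_option] at h2; linarith
  have e3 : σ3 none = 1 - ∑ c, σ3 (some c) := by
    rw [Fintype.sum_option] at h3; linarith
  unfold expPure1
  rw [Fintype.sum_option]
  simp only [Fintype.sum_option, payBot_some_none2, payBot_some_none3, payBot_some]
  have A : ∀ x : ℝ, ∑ c, x * σ3 (some c) * (r : ℝ) = x * (∑ c, σ3 (some c)) * r := by
    intro x
    rw [Finset.mul_sum, Finset.sum_mul]
  rw [A (σ2 none), Finset.sum_add_distrib]
  have C : ∑ x, σ2 (some x) * σ3 none * (r:ℝ) = (∑ x, σ2 (some x)) * σ3 none * r := by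
    rw [Finset.sum_mul, Finset.sum_mul]
  rw [C, e2, e3]; ring

end H2
set_option linter.unusedSectionVars false
section H3

lemma isMixed_pure {S : Type*} [Fintype S] [DecidableEq S] (a : S) : IsMixed (pureStrat a) := by
  constructor
  · intro b; unfold pureStrat; positivity
  · simp [pureStrat]

lemma isMixed_unif {S : Type*} [Fintype S] [Nonempty S] :
    IsMixed (fun _ : S => 1 / (Fintype.card S : ℝ)) := by
  have h : (0:ℝ) < (Fintype.card S : ℝ) := by
    exact_mod_cast Fintype.card_pos
  constructor
  · intro a; positivity
  · rw [Finset.sum_const, Finset.card_univ, nsmul_eq_mul]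
    field_simp

lemma expMix3_zeroPay {S1 S2 S3 : Type*} [Fintype S1] [Fintype S2] [Fintype S3]
    (σ1 : Option S1 → ℝ) (σ2 : Option S2 → ℝ) (σ3 : Option S3 → ℝ) :
    expMix3 zeroPay σ1 σ2 σ3 = 0 := by
  simp [expMix3, zeroPay]

end H3
set_option linter.unusedSectionVars false in
lemma optionStrat_fullyMixed {S : Type*} [Fintype S] {t : S → ℝ} (ht : ∀ b, 0 < t b)
    (hts : ∑ b, t b = 1) {e : ℝ} (he0 : 0 < e) (he1 : e < 1) :
    IsFullyMixed (fun o : Option S => o.elim (1 - e) (fun b => e * t b)) := by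
  constructor
  · intro o
    cases o with
    | none => simpa using he1
    | some b => simpa using mul_pos he0 (ht b)
  · rw [Fintype.sum_option]
    simp only [Option.elim_none, Option.elim_some]
    rw [← Finset.mul_sum, hts]
    ring
set_option maxHeartbeats 2000000 in
/-- the Nash equilibrium `(⊥,⊥,⊥)` of `G'` is trembling hand perfect
if Player 1's minmax value in `G` is strictly less than `r`, and is not trembling
hand perfect if the minmax value is strictly greater than `r`. -/
theorem minmax_reduces_to_THP
    {S1 S2 S3 : Type*} [Fintype S1] [Fintype S2] [Fintype S3]
    [Nonempty S1] [Nonempty S2] [Nonempty S3]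
    [DecidableEq S1] [DecidableEq S2] [DecidableEq S3]
    (u1 : S1 → S2 → S3 → ℤ) (r : ℤ) :
    (minmaxVal (fun a b c => (u1 a b c : ℝ)) < (r : ℝ) →
      IsTHP3 (payBot u1 r) zeroPay zeroPay
        (pureStrat (none : Option S1)) (pureStrat (none : Option S2))
        (pureStrat (none : Option S3))) ∧
    ((r : ℝ) < minmaxVal (fun a b c => (u1 a b c : ℝ)) →
      ¬ IsTHP3 (payBot u1 r) zeroPay zeroPay
        (pureStrat (none : Option S1)) (pureStrat (none : Option S2))
        (pureStrat (none : Option S3))) := by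
  set w : S1 → S2 → S3 → ℝ := fun a b c => (u1 a b c : ℝ) with hw
  -- a uniform bound on |w|
  obtain ⟨B, hB⟩ := (Set.finite_range (fun p : S1 × S2 × S3 => |w p.1 p.2.1 p.2.2|)).bddAbove
  set M : ℝ := max 1 B with hMdef
  have hM1 : (1:ℝ) ≤ M := le_max_left _ _
  have hM0 : (0:ℝ) < M := lt_of_lt_of_le one_pos hM1
  have hMw : ∀ a b c, |w a b c| ≤ M :=
    fun a b c => le_trans (hB (Set.mem_range_self (a, b, c))) (le_max_right _ _)
  have hMle : ∀ a b c, w a b c ≤ M := fun a b c => (abs_le.1 (hMw a b c)).2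
  have hMge : ∀ a b c, -M ≤ w a b c := fun a b c => (abs_le.1 (hMw a b c)).1
  set T : Set ℝ := {x | ∃ σ2 σ3, IsMixed σ2 ∧ IsMixed σ3 ∧ x = ⨆ a, expPure1 w a σ2 σ3} with hT
  have hminmax : minmaxVal w = sInf T := rfl
  -- bddAbove of range for ciSup manipulation
  have hba : ∀ (σ2 : S2 → ℝ) (σ3 : S3 → ℝ), BddAbove (Set.range fun a => expPure1 w a σ2 σ3) :=
    fun σ2 σ3 => (Set.finite_range _).bddAbove
  have hTbdd : BddBelow T := by
    refine ⟨-M, fun x hx => ?_⟩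
    obtain ⟨σ2, σ3, h2, h3, rfl⟩ := hx
    exact le_trans (le_expPure1 w (Classical.arbitrary S1) h2 h3 (hMge _))
      (le_ciSup (hba σ2 σ3) (Classical.arbitrary S1))
  have hTne : T.Nonempty := by
    exact ⟨_, pureStrat (Classical.arbitrary S2), pureStrat (Classical.arbitrary S3),
      isMixed_pure _, isMixed_pure _, rfl⟩
  constructor
  · -- minmax < r : THP
    intro hlt
    rw [hminmax] at hlt
    obtain ⟨x, hxT, hxr⟩ := (csInf_lt_iff hTbdd hTne).1 hlt
    obtain ⟨τ2, τ3, hτ2, hτ3, rfl⟩ := hxT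
    set s : ℝ := ⨆ a, expPure1 w a τ2 τ3 with hs
    have hs_a : ∀ a, expPure1 w a τ2 τ3 ≤ s := fun a => le_ciSup (hba τ2 τ3) a
    have hsM : s ≤ M := ciSup_le fun a => expPure1_le w a hτ2 hτ3 (hMle a)
    have hMs : -M ≤ s :=
      le_trans (le_expPure1 w (Classical.arbitrary S1) hτ2 hτ3 (hMge _)) (hs_a _)
    have hrs : 0 < (r:ℝ) - s := by linarith
    set δ : ℝ := min (1/2) (((r:ℝ) - s)/(8*M)) with hδdef
    have hδ0 : 0 < δ := lt_min (by norm_num) (by positivity)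
    have hδh : δ ≤ 1/2 := min_le_left _ _
    set ε : ℕ → ℝ := fun k => δ / ((k:ℝ)+1) with hεdef
    have hε0 : ∀ k, 0 < ε k := fun k => by
      have h1 : (0:ℝ) < (k:ℝ)+1 := by positivity
      exact div_pos hδ0 h1
    have hεδ : ∀ k, ε k ≤ δ := fun k => by
      have h1 : (1:ℝ) ≤ (k:ℝ)+1 := by
        have := Nat.cast_nonneg (α := ℝ) k; linarith
      simpa [hεdef] using div_le_self hδ0.le h1
    have hεh : ∀ k, ε k ≤ 1/2 := fun k => le_trans (hεδ k) hδh
    have hεlt1 : ∀ k, ε k < 1 := fun k => lt_of_le_of_lt (hεh k) (by norm_num)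
    have hε8 : ∀ k, 8*M*(ε k) ≤ (r:ℝ) - s := fun k => by
      have h1 := le_trans (hεδ k) (min_le_right (1/2 : ℝ) (((r:ℝ) - s)/(8*M)))
      have h2 : 8*M*(ε k) ≤ 8*M*(((r:ℝ)-s)/(8*M)) :=
        mul_le_mul_of_nonneg_left h1 (by positivity)
      calc 8*M*(ε k) ≤ 8*M*(((r:ℝ)-s)/(8*M)) := h2
        _ = (r:ℝ)-s := by field_simp
    have hεlim : Tendsto ε atTop (nhds 0) := by
      rw [hεdef]
      have h1 := tendsto_one_div_add_atTop_nhds_zero_nat.const_mul δ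
      simpa [mul_one_div, div_eq_mul_inv] using h1
    -- uniform strategies
    set u1' : S1 → ℝ := fun _ => 1/(Fintype.card S1 : ℝ) with hu1def
    set u2' : S2 → ℝ := fun _ => 1/(Fintype.card S2 : ℝ) with hu2def
    set u3' : S3 → ℝ := fun _ => 1/(Fintype.card S3 : ℝ) with hu3def
    have hu1m : IsMixed u1' := isMixed_unif
    have hu2m : IsMixed u2' := isMixed_unif
    have hu3m : IsMixed u3' := isMixed_unif
    have hu1p : ∀ a, 0 < u1' a := fun a => by
      rw [hu1def]
      have : (0:ℝ) < (Fintype.card S1 : ℝ) := by exact_mod_cast Fintype.card_pos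
      positivity
    have hu2p : ∀ b, 0 < u2' b := fun b => by
      rw [hu2def]
      have : (0:ℝ) < (Fintype.card S2 : ℝ) := by exact_mod_cast Fintype.card_pos
      positivity
    have hu3p : ∀ c, 0 < u3' c := fun c => by
      rw [hu3def]
      have : (0:ℝ) < (Fintype.card S3 : ℝ) := by exact_mod_cast Fintype.card_pos
      positivity
    -- the inner mixtures for players 2 and 3
    have hp2 : ∀ k b, 0 < (1 - ε k) * τ2 b + ε k * u2' b := fun k b => by
      have h1 : 0 ≤ (1 - ε k) * τ2 b :=
        mul_nonneg (by have := hεh k; linarith) (hτ2.1 b)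
      have h2 : 0 < ε k * u2' b := mul_pos (hε0 k) (hu2p b)
      linarith
    have hp3 : ∀ k c, 0 < (1 - ε k) * τ3 c + ε k * u3' c := fun k c => by
      have h1 : 0 ≤ (1 - ε k) * τ3 c :=
        mul_nonneg (by have := hεh k; linarith) (hτ3.1 c)
      have h2 : 0 < ε k * u3' c := mul_pos (hε0 k) (hu3p c)
      linarith
    have hq2 : ∀ k, ∑ b, ((1 - ε k) * τ2 b + ε k * u2' b) = 1 := fun k => by
      rw [Finset.sum_add_distrib, ← Finset.mul_sum, ← Finset.mul_sum, hτ2.2, hu2m.2]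
      ring
    have hq3 : ∀ k, ∑ c, ((1 - ε k) * τ3 c + ε k * u3' c) = 1 := fun k => by
      rw [Finset.sum_add_distrib, ← Finset.mul_sum, ← Finset.mul_sum, hτ3.2, hu3m.2]
      ring
    -- the tremble sequences
    refine ⟨fun k o => o.elim (1 - ε k) (fun a => ε k * u1' a),
            fun k o => o.elim (1 - ε k) (fun b => ε k * ((1 - ε k) * τ2 b + ε k * u2' b)),
            fun k o => o.elim (1 - ε k) (fun c => ε k * ((1 - ε k) * τ3 c + ε k * u3' c)),
            fun k => ⟨optionStrat_fullyMixed hu1p hu1m.2 (hε0 k) (hεlt1 k),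
                      optionStrat_fullyMixed (hp2 k) (hq2 k) (hε0 k) (hεlt1 k),
                      optionStrat_fullyMixed (hp3 k) (hq3 k) (hε0 k) (hεlt1 k)⟩,
            ?_, ?_, ?_, 0, ?_⟩
    · intro a
      cases a with
      | none =>
        simp only [Option.elim_none, pureStrat, if_pos rfl]
        simpa using tendsto_const_nhds.sub hεlim
      | some a =>
        simp only [Option.elim_some, pureStrat, reduceCtorEq, if_false]
        simpa using hεlim.mul_const (u1' a)
    · intro b
      cases b with
      | none =>
        simp only [Option.elim_none, pureStrat, if_pos rfl]
        simpa using tendsto_const_nhds.sub hεlim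
      | some b =>
        simp only [Option.elim_some, pureStrat, reduceCtorEq, if_false]
        have h1 := hεlim.mul
          ((((tendsto_const_nhds : Tendsto (fun _ : ℕ => (1:ℝ)) atTop _).sub
              hεlim).mul_const (τ2 b)).add (hεlim.mul_const (u2' b)))
        simpa using h1
    · intro c
      cases c with
      | none =>
        simp only [Option.elim_none, pureStrat, if_pos rfl]
        simpa using tendsto_const_nhds.sub hεlim
      | some c =>
        simp only [Option.elim_some, pureStrat, reduceCtorEq, if_false]
        have h1 := hεlim.mul
          ((((tendsto_const_nhds : Tendsto (fun _ : ℕ => (1:ℝ)) atTop _).sub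
              hεlim).mul_const (τ3 c)).add (hεlim.mul_const (u3' c)))
        simpa using h1
    · intro k _
      have h2fm := optionStrat_fullyMixed (hp2 k) (hq2 k) (hε0 k) (hεlt1 k)
      have h3fm := optionStrat_fullyMixed (hp3 k) (hq3 k) (hε0 k) (hεlt1 k)
      refine ⟨?_, ?_, ?_⟩
      · intro τ hτm
        rw [expMix3_eq_sum, expMix3_pure, expPure1_payBot_none u1 r h2fm.2 h3fm.2]
        have key : ∀ x : Option S1,
            expPure1 (payBot u1 r) x
              (fun o => o.elim (1 - ε k) (fun b => ε k * ((1 - ε k) * τ2 b + ε k * u2' b)))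
              (fun o => o.elim (1 - ε k) (fun c => ε k * ((1 - ε k) * τ3 c + ε k * u3' c)))
              ≤ (r:ℝ) := by
          intro x
          cases x with
          | none => exact le_of_eq (expPure1_payBot_none u1 r h2fm.2 h3fm.2)
          | some a =>
            rw [expPure1_payBot_some u1 r a h2fm.2 h3fm.2]
            have es2 : ∑ b, (fun o : Option S2 =>
                o.elim (1 - ε k) (fun b => ε k * ((1 - ε k) * τ2 b + ε k * u2' b))) (some b)
                = ε k := by
              simp only [Option.elim_some]
              rw [← Finset.mul_sum, hq2 k, mul_one]
            have es3 : ∑ c, (fun o : Option S3 =>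
                o.elim (1 - ε k) (fun c => ε k * ((1 - ε k) * τ3 c + ε k * u3' c))) (some c)
                = ε k := by
              simp only [Option.elim_some]
              rw [← Finset.mul_sum, hq3 k, mul_one]
            have hdd : ∑ b, ∑ c,
                (fun o : Option S2 =>
                  o.elim (1 - ε k) (fun b => ε k * ((1 - ε k) * τ2 b + ε k * u2' b))) (some b)
                * (fun o : Option S3 =>
                  o.elim (1 - ε k) (fun c => ε k * ((1 - ε k) * τ3 c + ε k * u3' c))) (some c)
                * (u1 a b c : ℝ)
                = ε k * ε k * expPure1 w a (fun b => (1 - ε k) * τ2 b + ε k * u2' b)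
                    (fun c => (1 - ε k) * τ3 c + ε k * u3' c) := by
              simp only [Option.elim_some]
              exact sum_scale w a _ _ (ε k) (ε k)
            rw [es2, es3, hdd]
            have hX : expPure1 w a (fun b => (1 - ε k) * τ2 b + ε k * u2' b)
                (fun c => (1 - ε k) * τ3 c + ε k * u3' c) ≤ (r:ℝ) := by
              rw [expPure1_add2, expPure1_add3, expPure1_add3]
              have b11 : expPure1 w a τ2 τ3 ≤ s := hs_a a
              have b12u : expPure1 w a τ2 u3' ≤ M := expPure1_le w a hτ2 hu3m (hMle a)
              have b12l : -M ≤ expPure1 w a τ2 u3' := le_expPure1 w a hτ2 hu3m (hMge a)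
              have b21u : expPure1 w a u2' τ3 ≤ M := expPure1_le w a hu2m hτ3 (hMle a)
              have b21l : -M ≤ expPure1 w a u2' τ3 := le_expPure1 w a hu2m hτ3 (hMge a)
              have b22u : expPure1 w a u2' u3' ≤ M := expPure1_le w a hu2m hu3m (hMle a)
              have b22l : -M ≤ expPure1 w a u2' u3' := le_expPure1 w a hu2m hu3m (hMge a)
              have he0 := hε0 k
              have heh := hεh k
              have he8 := hε8 k
              nlinarith [mul_nonneg (mul_nonneg (by linarith : (0:ℝ) ≤ 1 - ε k)
                          (by linarith : (0:ℝ) ≤ 1 - ε k)) (by linarith : 0 ≤ s - expPure1 w a τ2 τ3),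
                mul_nonneg (mul_nonneg (by linarith : (0:ℝ) ≤ 1 - ε k) he0.le)
                  (by linarith : 0 ≤ M - expPure1 w a τ2 u3'),
                mul_nonneg (mul_nonneg he0.le (by linarith : (0:ℝ) ≤ 1 - ε k))
                  (by linarith : 0 ≤ M - expPure1 w a u2' τ3),
                mul_nonneg (mul_nonneg he0.le he0.le)
                  (by linarith : 0 ≤ M - expPure1 w a u2' u3'),
                mul_nonneg (mul_nonneg he0.le he0.le) (by linarith : 0 ≤ M - s),
                mul_nonneg he0.le (by linarith : 0 ≤ M + s),
                mul_nonneg he0.le hM0.le]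
            nlinarith [mul_nonneg (mul_nonneg (hε0 k).le (hε0 k).le) (sub_nonneg.2 hX)]
        calc ∑ x, τ x * expPure1 (payBot u1 r) x _ _
            ≤ ∑ x : Option S1, τ x * (r:ℝ) :=
              Finset.sum_le_sum fun x _ =>
                mul_le_mul_of_nonneg_left (key x) (hτm.1 x)
          _ = (r:ℝ) := by rw [← Finset.sum_mul, hτm.2, one_mul]
      · intro τ hτm
        simp [expMix3_zeroPay]
      · intro τ hτm
        simp [expMix3_zeroPay]
  · -- r < minmax : not THP
    intro hlt hTHP
    obtain ⟨σ1, σ2, σ3, hfm, _, _, _, N, hN⟩ := hTHP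
    have h2fm := (hfm N).2.1
    have h3fm := (hfm N).2.2
    set p2 : ℝ := ∑ b, σ2 N (some b) with hp2def
    set p3 : ℝ := ∑ c, σ3 N (some c) with hp3def
    have hp2 : 0 < p2 := Finset.sum_pos (fun b _ => h2fm.1 _) Finset.univ_nonempty
    have hp3 : 0 < p3 := Finset.sum_pos (fun c _ => h3fm.1 _) Finset.univ_nonempty
    set τ2 : S2 → ℝ := fun b => σ2 N (some b) / p2 with hτ2def
    set τ3 : S3 → ℝ := fun c => σ3 N (some c) / p3 with hτ3def
    have hτ2 : IsMixed τ2 := by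
      constructor
      · intro b; exact div_nonneg (h2fm.1 _).le hp2.le
      · rw [← Finset.sum_div]; field_simp; exact hp2def.symm
    have hτ3 : IsMixed τ3 := by
      constructor
      · intro c; exact div_nonneg (h3fm.1 _).le hp3.le
      · rw [← Finset.sum_div]; field_simp; exact hp3def.symm
    have key : ∀ a : S1, expPure1 w a τ2 τ3 ≤ (r : ℝ) := by
      intro a
      have hle := (hN N le_rfl).1 (pureStrat (some a)) (isMixed_pure _)
      rw [expMix3_pure, expMix3_pure, expPure1_payBot_none u1 r h2fm.2 h3fm.2,
        expPure1_payBot_some u1 r a h2fm.2 h3fm.2] at hle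
      have hsc : ∑ b, ∑ c, σ2 N (some b) * σ3 N (some c) * (u1 a b c : ℝ)
          = p2 * p3 * expPure1 w a τ2 τ3 := by
        rw [← sum_scale w a τ2 τ3 p2 p3]
        refine Finset.sum_congr rfl fun b _ => Finset.sum_congr rfl fun c _ => ?_
        have : p2 * τ2 b = σ2 N (some b) := by
          rw [hτ2def]; field_simp
        rw [this]
        have : p3 * τ3 c = σ3 N (some c) := by
          rw [hτ3def]; field_simp
        rw [this]
      rw [hsc] at hle
      have hpp : 0 < p2 * p3 := mul_pos hp2 hp3
      nlinarith [hle, hpp]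
    have hmem : (⨆ a, expPure1 w a τ2 τ3) ∈ T := ⟨τ2, τ3, hτ2, hτ3, rfl⟩
    have h1 : minmaxVal w ≤ ⨆ a, expPure1 w a τ2 τ3 := csInf_le hTbdd hmem
    have h2 : (⨆ a, expPure1 w a τ2 τ3) ≤ (r : ℝ) := ciSup_le key
    exact absurd (le_trans h1 h2) (not_le.2 hlt)
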